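/- There exists a universal constant C > 0 such that for every standard complex Gaussian ζ, every t > 0, every w ∈ ℂ, and every θ with 0 < θ ≤ 1, one has E[|w + ζ/t|^{-θ}] ≤ t^θ (1 + Cθ). -/

import Mathlib

open MeasureTheory Real Set


lemma norm_sq_complex (z : ℂ) : ‖z‖ ^ 2 = z.re ^ 2 + z.im ^ 2 := by
  rw [Complex.sq_norm, Complex.normSq_apply]; ring

lemma gauss_int : Integrable (fun z : ℂ => rexp (-‖z‖ ^ 2)) := by
  have h1 : Integrable (fun x : ℝ => rexp (-1 * x ^ 2)) := integrable_exp_neg_mul_sq one_pos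
  have h2 : Integrable (fun p : ℝ × ℝ => rexp (-1 * p.1 ^ 2) * rexp (-1 * p.2 ^ 2)) :=
    h1.mul_prod h1
  have h3 := (Complex.volume_preserving_equiv_real_prod.integrable_comp_emb
    Complex.measurableEquivRealProd.measurableEmbedding).mpr h2
  refine h3.congr (Filter.Eventually.of_forall fun z => ?_)
  simp only [Function.comp, Complex.measurableEquivRealProd]
  rw [← Real.exp_add, norm_sq_complex]
  simp
  ring

lemma gauss_val : ∫ z : ℂ, rexp (-‖z‖ ^ 2) = π := by
  have h := Complex.integral_exp_neg_rpow (p := 2) one_le_two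
  simp_rw [show ((2:ℝ)) = ((2:ℕ):ℝ) by norm_num, Real.rpow_natCast] at h
  rw [h]
  norm_num [Real.Gamma_two]

lemma B_le {θ : ℝ} (hθ0 : 0 < θ) (hθ1 : θ ≤ 1) :
    ∫⁻ z : ℂ, ENNReal.ofReal (max (‖z‖ ^ (-θ) - 1) 0) ≤ ENNReal.ofReal (π * θ) := by
  have hmeas : Measurable fun z : ℂ => max (‖z‖ ^ (-θ) - 1) 0 := by fun_prop
  rw [lintegral_eq_lintegral_meas_le (f := fun z : ℂ => max (‖z‖ ^ (-θ) - 1) 0) volume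
    (Filter.Eventually.of_forall fun z => le_max_right _ _) hmeas.aemeasurable]
  have key : ∀ s ∈ Ioi (0:ℝ), volume {z : ℂ | s ≤ max (‖z‖ ^ (-θ) - 1) 0}
      ≤ ENNReal.ofReal ((1 + s) ^ (-(2/θ))) * NNReal.pi := by
    intro s hs
    rw [mem_Ioi] at hs
    have hsub : {z : ℂ | s ≤ max (‖z‖ ^ (-θ) - 1) 0} ⊆
        Metric.closedBall 0 ((1 + s) ^ (-θ⁻¹)) := by
      intro z hz
      simp only [mem_setOf_eq] at hz
      have h1 : 1 + s ≤ ‖z‖ ^ (-θ) := by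
        rcases le_or_gt (‖z‖ ^ (-θ) - 1) 0 with h | h
        · rw [max_eq_right h] at hz; linarith
        · rw [max_eq_left h.le] at hz; linarith
      rw [Metric.mem_closedBall, dist_zero_right]
      have h2 := Real.rpow_le_rpow_of_nonpos (by linarith) h1
        (by simp [hθ0.le] : -θ⁻¹ ≤ 0)
      rwa [← Real.rpow_mul (norm_nonneg z), neg_mul_neg,
        mul_inv_cancel₀ hθ0.ne', Real.rpow_one] at h2
    calc volume {z : ℂ | s ≤ max (‖z‖ ^ (-θ) - 1) 0}
        ≤ volume (Metric.closedBall 0 ((1 + s) ^ (-θ⁻¹))) := measure_mono hsub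
      _ = ENNReal.ofReal ((1 + s) ^ (-θ⁻¹)) ^ 2 * NNReal.pi := Complex.volume_closedBall _ _
      _ = ENNReal.ofReal ((1 + s) ^ (-(2/θ))) * NNReal.pi := by
          rw [← ENNReal.ofReal_pow (by positivity), ← Real.rpow_natCast ((1+s) ^ (-θ⁻¹)) 2,
            ← Real.rpow_mul (by positivity)]
          norm_num
          rw [show -(θ⁻¹ * 2) = -(2 / θ) by rw [div_eq_mul_inv]; ring]
  calc ∫⁻ s in Ioi 0, volume {z : ℂ | s ≤ max (‖z‖ ^ (-θ) - 1) 0}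
      ≤ ∫⁻ s in Ioi 0, ENNReal.ofReal ((1 + s) ^ (-(2/θ))) * NNReal.pi :=
        setLIntegral_mono (by fun_prop) key
    _ = (∫⁻ s in Ioi 0, ENNReal.ofReal ((1 + s) ^ (-(2/θ)))) * NNReal.pi := by
        rw [lintegral_mul_const]; fun_prop
    _ ≤ ENNReal.ofReal (π * θ) := by
        have hlt : -(2/θ) < -1 := by
          have h2 : 1 < 2/θ := by rw [lt_div_iff₀ hθ0]; linarith
          linarith
        have hshift : (∫⁻ s in Ioi (0:ℝ), ENNReal.ofReal ((1 + s) ^ (-(2/θ))))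
            = ∫⁻ u in Ioi (1:ℝ), ENNReal.ofReal (u ^ (-(2/θ))) := by
          have hmp : MeasurePreserving (fun s : ℝ => 1 + s) volume volume :=
            measurePreserving_add_left volume 1
          have hemb : MeasurableEmbedding (fun s : ℝ => 1 + s) :=
            (MeasurableEquiv.addLeft (1:ℝ)).measurableEmbedding
          have := hmp.setLIntegral_comp_emb hemb
            (fun u => ENNReal.ofReal (u ^ (-(2/θ)))) (Ioi 0)
          rw [this, image_const_add_Ioi, add_zero]
        rw [hshift]
        have hint : IntegrableOn (fun u : ℝ => u ^ (-(2/θ))) (Ioi 1) :=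
          integrableOn_Ioi_rpow_of_lt hlt one_pos
        have hval : ∫ u in Ioi (1:ℝ), u ^ (-(2/θ)) = -1 ^ (-(2/θ) + 1) / (-(2/θ) + 1) :=
          integral_Ioi_rpow_of_lt hlt one_pos
        rw [← ofReal_integral_eq_lintegral_ofReal hint
          ((ae_restrict_iff' measurableSet_Ioi).mpr (Filter.Eventually.of_forall
            fun u hu => Real.rpow_nonneg (by linarith [mem_Ioi.mp hu]) _))]
        have hθ2 : θ < 2 := by linarith
        have key2 : -1 ^ (-(2/θ) + 1) / (-(2/θ) + 1) = θ / (2 - θ) := by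
          rw [Real.one_rpow, div_eq_div_iff]
          · field_simp
            ring
          · have : 1 < 2/θ := by rw [lt_div_iff₀ hθ0]; linarith
            linarith
          · linarith
        rw [hval, key2]
        have hpi : (NNReal.pi : ENNReal) = ENNReal.ofReal π := by
          rw [← NNReal.coe_real_pi, ENNReal.ofReal_coe_nnreal]
        rw [hpi, ← ENNReal.ofReal_mul (div_nonneg hθ0.le (by linarith))]
        apply ENNReal.ofReal_le_ofReal
        rw [div_mul_eq_mul_div, div_le_iff₀ (by linarith)]
        nlinarith [mul_nonneg (mul_nonneg pi_pos.le hθ0.le) (sub_nonneg.mpr hθ1)]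

/-- There is a universal constant C > 0 such that for every t > 0, w ∈ ℂ and 0 < θ ≤ 1,
`E[|w + ζ/t|^{-θ}] ≤ t^θ (1 + Cθ)` for a standard complex Gaussian ζ. -/
theorem hole_prob_stmt_4 :
    ∃ C > (0 : ℝ), ∀ (t : ℝ), 0 < t → ∀ (w : ℂ) (θ : ℝ), 0 < θ → θ ≤ 1 →
      (∫ z : ℂ, ‖w + z / (t : ℂ)‖ ^ (-θ) * ((1 / π) * Real.exp (-‖z‖ ^ 2)))
        ≤ t ^ θ * (1 + C * θ) := by
  refine ⟨1, one_pos, fun t ht w θ hθ0 hθ1 => ?_⟩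
  have hπ : (0:ℝ) < π := pi_pos
  have htθ : (0:ℝ) < t ^ θ := rpow_pos_of_pos ht θ
  have htc : (t:ℂ) ≠ 0 := Complex.ofReal_ne_zero.mpr ht.ne'
  have hfnn : ∀ z : ℂ, 0 ≤ ‖w + z / (t:ℂ)‖ ^ (-θ) * ((1/π) * rexp (-‖z‖ ^ 2)) :=
    fun z => mul_nonneg (Real.rpow_nonneg (norm_nonneg _) _) (by positivity)
  have hfm : Measurable fun z : ℂ => ‖w + z / (t:ℂ)‖ ^ (-θ) * ((1/π) * rexp (-‖z‖ ^ 2)) := by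
    fun_prop
  rw [integral_eq_lintegral_of_nonneg_ae (Filter.Eventually.of_forall hfnn)
    hfm.aestronglyMeasurable]
  have hbound : (∫⁻ z : ℂ, ENNReal.ofReal (‖w + z / (t:ℂ)‖ ^ (-θ) * ((1/π) * rexp (-‖z‖ ^ 2))))
      ≤ ENNReal.ofReal (t ^ θ * (1 + θ)) := by
    -- pointwise bound
    have hpt : ∀ z : ℂ,
        ENNReal.ofReal (‖w + z / (t:ℂ)‖ ^ (-θ) * ((1/π) * rexp (-‖z‖ ^ 2)))
          ≤ ENNReal.ofReal (t ^ θ * ((1/π) * rexp (-‖z‖ ^ 2)))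
            + ENNReal.ofReal ((1/π) * max (‖w + z / (t:ℂ)‖ ^ (-θ) - t ^ θ) 0) := by
      intro z
      rw [← ENNReal.ofReal_add (by positivity)
        (mul_nonneg (by positivity) (le_max_right _ _))]
      apply ENNReal.ofReal_le_ofReal
      set x := ‖w + z / (t:ℂ)‖ ^ (-θ) with hx
      have hx0 : 0 ≤ x := Real.rpow_nonneg (norm_nonneg _) _
      set e := rexp (-‖z‖ ^ 2) with he
      have he0 : 0 < e := Real.exp_pos _
      have he1 : e ≤ 1 := Real.exp_le_one_iff.mpr (neg_nonpos.mpr (by positivity))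
      rcases le_total x (t ^ θ) with h | h
      · rw [max_eq_right (sub_nonpos.mpr h)]
        have h2 : x * ((1/π) * e) ≤ t ^ θ * ((1/π) * e) := by gcongr
        nlinarith
      · rw [max_eq_left (sub_nonneg.mpr h)]
        nlinarith [mul_nonneg (mul_nonneg (sub_nonneg.mpr h) (one_div_nonneg.mpr hπ.le))
          (sub_nonneg.mpr he1)]
    refine le_trans (lintegral_mono hpt) ?_
    rw [lintegral_add_left (by fun_prop)]
    have L1 : (∫⁻ z : ℂ, ENNReal.ofReal (t ^ θ * ((1/π) * rexp (-‖z‖ ^ 2))))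
        = ENNReal.ofReal (t ^ θ) := by
      simp_rw [← mul_assoc, ENNReal.ofReal_mul (by positivity : (0:ℝ) ≤ t ^ θ * (1/π))]
      rw [lintegral_const_mul _ (by fun_prop),
        ← ofReal_integral_eq_lintegral_ofReal gauss_int
          (Filter.Eventually.of_forall fun z => (Real.exp_pos _).le),
        gauss_val, ← ENNReal.ofReal_mul (by positivity)]
      congr 1
      field_simp
    have L2 : (∫⁻ z : ℂ, ENNReal.ofReal ((1/π) * max (‖w + z / (t:ℂ)‖ ^ (-θ) - t ^ θ) 0))
        ≤ ENNReal.ofReal (t ^ θ * θ) := by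
      simp_rw [ENNReal.ofReal_mul (by positivity : (0:ℝ) ≤ 1/π)]
      rw [lintegral_const_mul _ (by fun_prop)]
      have hN : ∀ z : ℂ, max (‖w + z / (t:ℂ)‖ ^ (-θ) - t ^ θ) 0
          = (fun u : ℂ => max (‖u / (t:ℂ)‖ ^ (-θ) - t ^ θ) 0) (((t:ℝ):ℂ) * w + z) := by
        intro z
        simp only
        rw [add_div, mul_div_cancel_left₀ _ htc]
      have hK : (∫⁻ z : ℂ, ENNReal.ofReal (max (‖w + z / (t:ℂ)‖ ^ (-θ) - t ^ θ) 0))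
          = ∫⁻ z : ℂ, ENNReal.ofReal (max (‖z / (t:ℂ)‖ ^ (-θ) - t ^ θ) 0) := by
        simp_rw [hN]
        exact lintegral_add_left_eq_self
          (fun u : ℂ => ENNReal.ofReal (max (‖u / (t:ℂ)‖ ^ (-θ) - t ^ θ) 0)) (((t:ℝ):ℂ) * w)
      rw [hK]
      have hscale : ∀ z : ℂ, max (‖z / (t:ℂ)‖ ^ (-θ) - t ^ θ) 0
          = t ^ θ * max (‖z‖ ^ (-θ) - 1) 0 := by
        intro z
        have h1 : ‖z / (t:ℂ)‖ ^ (-θ) = t ^ θ * ‖z‖ ^ (-θ) := by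
          rw [norm_div, Complex.norm_real, Real.norm_eq_abs, abs_of_pos ht,
            Real.div_rpow (norm_nonneg z) ht.le, Real.rpow_neg ht.le, div_eq_mul_inv, inv_inv, mul_comm]
        rw [h1, mul_max_of_nonneg _ _ htθ.le, mul_zero, mul_sub, mul_one]
      simp_rw [hscale, ENNReal.ofReal_mul htθ.le]
      rw [lintegral_const_mul _ (by fun_prop)]
      calc ENNReal.ofReal (1/π) * (ENNReal.ofReal (t ^ θ)
              * ∫⁻ z : ℂ, ENNReal.ofReal (max (‖z‖ ^ (-θ) - 1) 0))
          ≤ ENNReal.ofReal (1/π) * (ENNReal.ofReal (t ^ θ) * ENNReal.ofReal (π * θ)) := by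
            gcongr
            exact B_le hθ0 hθ1
        _ = ENNReal.ofReal (t ^ θ) * ENNReal.ofReal θ := by
            rw [← ENNReal.ofReal_mul (by positivity), ← ENNReal.ofReal_mul (by positivity),
              ← ENNReal.ofReal_mul htθ.le]
            congr 1
            field_simp
    calc (∫⁻ z : ℂ, ENNReal.ofReal (t ^ θ * ((1/π) * rexp (-‖z‖ ^ 2))))
          + ∫⁻ z : ℂ, ENNReal.ofReal ((1/π) * max (‖w + z / (t:ℂ)‖ ^ (-θ) - t ^ θ) 0)
        ≤ ENNReal.ofReal (t ^ θ) + ENNReal.ofReal (t ^ θ * θ) := add_le_add L1.le L2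
      _ = ENNReal.ofReal (t ^ θ * (1 + θ)) := by
          rw [← ENNReal.ofReal_add htθ.le (by positivity)]
          congr 1
          ring
  have : t ^ θ * (1 + 1 * θ) = t ^ θ * (1 + θ) := by ring
  rw [this]
  exact ENNReal.toReal_le_of_le_ofReal (by positivity) hbound
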